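/- For all reals a,c > 0, the strip free energies with no interaction at the top wall converge to the half-plane free energy: lim_{w→∞} κ_w(a,1,c) = κ⁺(a,c), where κ⁺(a,c) = lim_{n→∞} (1/(2n)) log Z⁺_{2n,0}(a,c) is the half-plane loop free energy (this limit exists by supermultiplicativity). Moreover κ_w(a,1,c) ≤ κ⁺(a,c) for every w ≥ 1. -/

import Mathlib

open Filter
open scoped Classical

noncomputable section

/-- Step value of a Boolean step: `true` is an up step (+1), `false` a down step (−1). -/
def stepVal (x : Bool) : ℤ := if x then 1 else -1

/-- Height of the walk after `k` steps. -/
def ht (σ : ℕ → Bool) (k : ℕ) : ℤ := ∑ i ∈ Finset.range k, stepVal (σ i)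

/-- Extend a finite sequence of steps to `ℕ → Bool`. -/
def extFun {n : ℕ} (σ : Fin n → Bool) : ℕ → Bool :=
  fun i => if h : i < n then σ ⟨i, h⟩ else false

/-- The first `n` steps of `σ` stay in the strip `0 ≤ y ≤ w`. -/
def IsWalk (w n : ℕ) (σ : ℕ → Bool) : Prop :=
  ∀ k ≤ n, 0 ≤ ht σ k ∧ ht σ k ≤ (w : ℤ)

/-- Number of contacts with the bottom wall (excluding the origin):
`m_a(φ) = #{1 ≤ k ≤ n : h_k = 0}`. -/
def ma (n : ℕ) (σ : ℕ → Bool) : ℕ :=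
  ((Finset.Icc 1 n).filter (fun k => ht σ k = 0)).card

/-- Number of contacts with the top wall: `m_b(φ) = #{1 ≤ k ≤ n : h_k = w}`. -/
def mb (w n : ℕ) (σ : ℕ → Bool) : ℕ :=
  ((Finset.Icc 1 n).filter (fun k => ht σ k = (w : ℤ))).card

/-- Number of stiffness points: `m_c(φ) = #{1 ≤ k ≤ n−1 : σ_k = σ_{k+1}}`. -/
def mc (n : ℕ) (σ : ℕ → Bool) : ℕ :=
  ((Finset.range (n - 1)).filter (fun i => σ i = σ (i + 1))).card

/-- Boltzmann weight of a walk: `W(φ) = a^{m_a} b^{m_b} c^{m_c}`. -/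
def wt (w n : ℕ) (a b c : ℝ) (σ : ℕ → Bool) : ℝ :=
  a ^ ma n σ * b ^ mb w n σ * c ^ mc n σ

/-- Partition function `Z_{w,n}(a,b,c)`: sum of weights over all walks of length `n`
in the strip of width `w`. -/
def Z (w n : ℕ) (a b c : ℝ) : ℝ :=
  ∑ σ ∈ Finset.univ.filter (fun σ : Fin n → Bool => IsWalk w n (extFun σ)),
    wt w n a b c (extFun σ)

/-- Fixed-endpoint partition function `Z_{w,n,h}(a,b,c)`: sum over walks of length `n`
in the strip of width `w` ending at height `h`. -/
def Zh (w n h : ℕ) (a b c : ℝ) : ℝ :=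
  ∑ σ ∈ Finset.univ.filter
      (fun σ : Fin n → Bool => IsWalk w n (extFun σ) ∧ ht (extFun σ) n = (h : ℤ)),
    wt w n a b c (extFun σ)

end
noncomputable section

/-- The first `n` steps of `σ` stay in the half-plane `y ≥ 0`. -/
def IsHPWalk (n : ℕ) (σ : ℕ → Bool) : Prop := ∀ k ≤ n, 0 ≤ ht σ k

/-- Half-plane loop partition function `Z⁺_{n,0}(a,c)`: sum of `a^{m_a} c^{m_c}` over
half-plane walks of length `n` ending at height 0. -/
def Zp (n : ℕ) (a c : ℝ) : ℝ :=
  ∑ σ ∈ Finset.univ.filter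
      (fun σ : Fin n → Bool => IsHPWalk n (extFun σ) ∧ ht (extFun σ) n = 0),
    a ^ ma n (extFun σ) * c ^ mc n (extFun σ)

end

noncomputable section
open Finset

namespace StripHP

lemma ht_succ (σ : ℕ → Bool) (k : ℕ) : ht σ (k+1) = ht σ k + stepVal (σ k) :=
  Finset.sum_range_succ _ _

lemma ht_congr {σ τ : ℕ → Bool} {k : ℕ} (h : ∀ i < k, σ i = τ i) : ht σ k = ht τ k :=
  Finset.sum_congr rfl fun i hi => by rw [h i (Finset.mem_range.mp hi)]

lemma even_ht_add (σ : ℕ → Bool) (n : ℕ) : (ht σ n + n) % 2 = 0 := by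
  induction n with
  | zero => simp [ht]
  | succ n ih =>
    rw [ht_succ]
    unfold stepVal
    split <;> push_cast <;> omega

/-- concatenation of step sequences -/
def cat (n : ℕ) (σ τ : ℕ → Bool) : ℕ → Bool := fun i => if i < n then σ i else τ (i - n)

lemma cat_lt {n i : ℕ} (σ τ : ℕ → Bool) (h : i < n) : cat n σ τ i = σ i := if_pos h

lemma cat_ge {n i : ℕ} (σ τ : ℕ → Bool) (h : n ≤ i) : cat n σ τ i = τ (i - n) :=
  if_neg (by omega)

lemma ht_cat_le {n k : ℕ} (σ τ : ℕ → Bool) (h : k ≤ n) : ht (cat n σ τ) k = ht σ k :=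
  ht_congr fun i hi => cat_lt σ τ (by omega)

lemma ht_cat_add (n j : ℕ) (σ τ : ℕ → Bool) :
    ht (cat n σ τ) (n + j) = ht σ n + ht τ j := by
  induction j with
  | zero => simpa [ht] using ht_cat_le σ τ (le_refl n)
  | succ j ih =>
    have : n + (j + 1) = (n + j) + 1 := by omega
    rw [this, ht_succ, ih, cat_ge σ τ (by omega), Nat.add_sub_cancel_left, ht_succ]
    ring

end StripHP
end
noncomputable section
open Finset
namespace StripHP

lemma ma_congr {σ τ : ℕ → Bool} {n : ℕ} (h : ∀ i < n, σ i = τ i) : ma n σ = ma n τ := by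
  unfold ma
  congr 1
  apply Finset.filter_congr
  intro k hk
  rw [Finset.mem_Icc] at hk
  rw [ht_congr (fun i hi => h i (by omega))]

lemma mc_congr {σ τ : ℕ → Bool} {n : ℕ} (h : ∀ i < n, σ i = τ i) : mc n σ = mc n τ := by
  unfold mc
  congr 1
  apply Finset.filter_congr
  intro k hk
  rw [Finset.mem_range] at hk
  rw [h k (by omega), h (k+1) (by omega)]

lemma ma_mono {σ : ℕ → Bool} {n N : ℕ} (h : n ≤ N) : ma n σ ≤ ma N σ := by
  unfold ma
  apply Finset.card_le_card
  apply Finset.filter_subset_filter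
  exact Finset.Icc_subset_Icc le_rfl h

lemma ma_le {σ : ℕ → Bool} {n N : ℕ} (h : n ≤ N) : ma N σ ≤ ma n σ + (N - n) := by
  unfold ma
  calc ((Finset.Icc 1 N).filter (fun k => ht σ k = 0)).card
      ≤ (((Finset.Icc 1 n).filter (fun k => ht σ k = 0)) ∪ Finset.Icc (n+1) N).card := by
        apply Finset.card_le_card
        intro k hk
        simp only [Finset.mem_filter, Finset.mem_Icc, Finset.mem_union] at *
        omega
    _ ≤ _ := by
        refine le_trans (Finset.card_union_le _ _) ?_
        have : (Finset.Icc (n+1) N).card = N - n := by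
          rw [Nat.card_Icc]; omega
        omega

lemma mc_mono {σ : ℕ → Bool} {n N : ℕ} (h : n ≤ N) : mc n σ ≤ mc N σ := by
  unfold mc
  apply Finset.card_le_card
  apply Finset.filter_subset_filter
  exact Finset.range_subset_range.mpr (by omega)

lemma mc_le {σ : ℕ → Bool} {n N : ℕ} (hn : 1 ≤ n) (h : n ≤ N) :
    mc N σ ≤ mc n σ + (N - n) := by
  unfold mc
  calc ((Finset.range (N-1)).filter (fun i => σ i = σ (i+1))).card
      ≤ (((Finset.range (n-1)).filter (fun i => σ i = σ (i+1))) ∪ Finset.Ico (n-1) (N-1)).card := by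
        apply Finset.card_le_card
        intro k hk
        simp only [Finset.mem_filter, Finset.mem_range, Finset.mem_union, Finset.mem_Ico] at *
        obtain ⟨h1, h2⟩ := hk
        by_cases hkn : k < n - 1
        · exact Or.inl ⟨hkn, h2⟩
        · exact Or.inr ⟨by omega, h1⟩
    _ ≤ _ := by
        refine le_trans (Finset.card_union_le _ _) ?_
        have : (Finset.Ico (n-1) (N-1)).card = N - n := by
          rw [Nat.card_Ico]; omega
        omega

lemma pow_sandwich {a : ℝ} (ha : 0 < a) {s t d : ℕ} (h1 : s ≤ t) (h2 : t ≤ s + d) :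
    a ^ s * (min 1 a) ^ d ≤ a ^ t := by
  obtain ⟨e, rfl⟩ := Nat.exists_eq_add_of_le h1
  rw [pow_add]
  have h0 : (0:ℝ) ≤ min 1 a := le_min zero_le_one ha.le
  have h1' : min 1 a ≤ 1 := min_le_left _ _
  gcongr
  calc (min 1 a) ^ d ≤ (min 1 a) ^ e := pow_le_pow_of_le_one h0 h1' (by omega)
    _ ≤ a ^ e := pow_le_pow_left₀ h0 (min_le_right _ _) e

end StripHP
end
noncomputable section
open Finset
namespace StripHP

/-- Padding: `h` down steps followed by up-down pairs. -/
def padSeq (h : ℕ) : ℕ → Bool := fun j => if j < h then false else decide (Even (j - h))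

lemma ht_padSeq (h j : ℕ) :
    ht (padSeq h) j = if j ≤ h then -(j:ℤ) else -(h:ℤ) + ((j - h) % 2 : ℕ) := by
  induction j with
  | zero => simp [ht]
  | succ j ih =>
    rw [ht_succ, ih]
    rcases Nat.lt_or_ge j h with hj | hj
    · simp only [padSeq, stepVal, if_pos hj, if_pos (show j ≤ h by omega),
        if_pos (show j + 1 ≤ h by omega)]
      norm_num
      push_cast
      ring
    · have hb : padSeq h j = decide (Even (j - h)) := by
        simp [padSeq, show ¬ j < h by omega]
      rw [if_neg (show ¬ j + 1 ≤ h by omega), hb]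
      rcases Nat.even_or_odd (j - h) with he | he
      · have h2 : (j - h) % 2 = 0 := Nat.even_iff.mp he
        have h2' : (j + 1 - h) % 2 = 1 := by omega
        rw [decide_eq_true he, h2']
        simp only [stepVal, if_true]
        rcases Nat.eq_or_lt_of_le hj with rfl | hlt
        · rw [if_pos le_rfl]; push_cast; omega
        · rw [if_neg (by omega), h2]; push_cast; omega
      · have h2 : (j - h) % 2 = 1 := Nat.odd_iff.mp he
        have h2' : (j + 1 - h) % 2 = 0 := by omega
        have hne : ¬ Even (j - h) := by simp [Nat.even_iff, h2]
        rw [decide_eq_false hne, h2', if_neg (show ¬ j ≤ h by omega), h2]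
        simp only [stepVal, Bool.false_eq_true, if_false]
        push_cast; omega
end StripHP
end
noncomputable section
open Finset
namespace StripHP

lemma ma_cat {n m : ℕ} {σ τ : ℕ → Bool} (hσ : ht σ n = 0) :
    ma (n + m) (cat n σ τ) = ma n σ + ma m τ := by
  unfold ma
  have hsplit : Finset.Icc 1 (n + m) = Finset.Icc 1 n ∪ Finset.Icc (n+1) (n+m) := by
    ext k; simp only [Finset.mem_Icc, Finset.mem_union]; omega
  have hdisj : Disjoint ((Finset.Icc 1 n).filter (fun k => ht (cat n σ τ) k = 0))
      ((Finset.Icc (n+1) (n+m)).filter (fun k => ht (cat n σ τ) k = 0)) := by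
    apply Finset.disjoint_filter_filter
    rw [Finset.disjoint_left]
    intro k hk hk'
    simp only [Finset.mem_Icc] at *
    omega
  rw [hsplit, Finset.filter_union, Finset.card_union_of_disjoint hdisj]
  congr 1
  · apply Finset.card_bij (fun k _ => k)
    · intro k hk
      simp only [Finset.mem_filter, Finset.mem_Icc] at *
      exact ⟨hk.1, by rw [← ht_cat_le σ τ hk.1.2]; exact hk.2⟩
    · intro k _ k' _ h; exact h
    · intro k hk
      simp only [Finset.mem_filter, Finset.mem_Icc] at *
      exact ⟨k, ⟨hk.1, by rw [ht_cat_le σ τ hk.1.2]; exact hk.2⟩, rfl⟩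
  · apply Finset.card_bij (fun k _ => k - n)
    · intro k hk
      simp only [Finset.mem_filter, Finset.mem_Icc] at *
      refine ⟨⟨by omega, by omega⟩, ?_⟩
      have : k = n + (k - n) := by omega
      rw [this, ht_cat_add, hσ, zero_add] at hk
      exact hk.2
    · intro k hk k' hk' h
      simp only [Finset.mem_filter, Finset.mem_Icc] at *
      omega
    · intro j hj
      simp only [Finset.mem_filter, Finset.mem_Icc] at *
      exact ⟨n + j, ⟨⟨by omega, by omega⟩, by
        rw [ht_cat_add, hσ, zero_add]
        exact hj.2⟩, by omega⟩

lemma mc_cat_ge {n m : ℕ} (hn : 1 ≤ n) (σ τ : ℕ → Bool) :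
    mc n σ + mc m τ ≤ mc (n + m) (cat n σ τ) := by
  classical
  set A := (Finset.range (n-1)).filter (fun i => cat n σ τ i = cat n σ τ (i+1)) with hA
  set B := ((Finset.range (m-1)).filter (fun i => τ i = τ (i+1))).image (fun i => n + i) with hB
  have hcardA : A.card = mc n σ := by
    unfold mc; rw [hA]
    congr 1
    apply Finset.filter_congr
    intro i hi
    rw [Finset.mem_range] at hi
    rw [cat_lt σ τ (by omega), cat_lt σ τ (by omega)]
  have hcardB : B.card = mc m τ := by
    rw [hB, Finset.card_image_of_injective _ (fun x y h => by omega)]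
    rfl
  have hdisj : Disjoint A B := by
    rw [Finset.disjoint_left]
    intro i hiA hiB
    rw [hA] at hiA; rw [hB] at hiB
    simp only [Finset.mem_filter, Finset.mem_range, Finset.mem_image] at *
    omega
  have hsub : A ∪ B ⊆ (Finset.range (n + m - 1)).filter
      (fun i => cat n σ τ i = cat n σ τ (i+1)) := by
    intro i hi
    rcases Finset.mem_union.mp hi with hiA | hiB
    · rw [hA] at hiA
      simp only [Finset.mem_filter, Finset.mem_range] at *
      exact ⟨by omega, hiA.2⟩
    · rw [hB] at hiB
      simp only [Finset.mem_image, Finset.mem_filter, Finset.mem_range] at hiB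
      obtain ⟨j, ⟨hj, hjc⟩, rfl⟩ := hiB
      simp only [Finset.mem_filter, Finset.mem_range]
      refine ⟨by omega, ?_⟩
      rw [cat_ge σ τ (by omega), cat_ge σ τ (by omega)]
      have e1 : n + j - n = j := by omega
      have e2 : n + j + 1 - n = j + 1 := by omega
      rw [e1, e2]; exact hjc
  calc mc n σ + mc m τ = (A ∪ B).card := by
        rw [Finset.card_union_of_disjoint hdisj, hcardA, hcardB]
    _ ≤ _ := Finset.card_le_card hsub

lemma mc_cat_le {n m : ℕ} (hn : 1 ≤ n) (σ τ : ℕ → Bool) :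
    mc (n + m) (cat n σ τ) ≤ mc n σ + mc m τ + 1 := by
  classical
  set A := (Finset.range (n-1)).filter (fun i => cat n σ τ i = cat n σ τ (i+1)) with hA
  set B := ((Finset.range (m-1)).filter (fun i => τ i = τ (i+1))).image (fun i => n + i) with hB
  have hcardA : A.card = mc n σ := by
    unfold mc; rw [hA]
    congr 1
    apply Finset.filter_congr
    intro i hi
    rw [Finset.mem_range] at hi
    rw [cat_lt σ τ (by omega), cat_lt σ τ (by omega)]
  have hcardB : B.card = mc m τ := by
    rw [hB, Finset.card_image_of_injective _ (fun x y h => by omega)]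
    rfl
  have hsub : (Finset.range (n + m - 1)).filter
      (fun i => cat n σ τ i = cat n σ τ (i+1)) ⊆ (A ∪ B) ∪ {n - 1} := by
    intro i hi
    simp only [Finset.mem_filter, Finset.mem_range] at hi
    obtain ⟨hi1, hi2⟩ := hi
    rcases lt_trichotomy i (n-1) with hlt | heq | hgt
    · apply Finset.mem_union_left; apply Finset.mem_union_left
      rw [hA]; simp only [Finset.mem_filter, Finset.mem_range]
      exact ⟨hlt, hi2⟩
    · exact Finset.mem_union_right _ (by simp [heq])
    · apply Finset.mem_union_left; apply Finset.mem_union_right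
      rw [hB]; simp only [Finset.mem_image, Finset.mem_filter, Finset.mem_range]
      refine ⟨i - n, ⟨by omega, ?_⟩, by omega⟩
      rw [cat_ge σ τ (by omega), cat_ge σ τ (by omega)] at hi2
      have e1 : i + 1 - n = i - n + 1 := by omega
      rw [e1] at hi2
      exact hi2
  calc mc (n + m) (cat n σ τ) ≤ ((A ∪ B) ∪ {n-1}).card := Finset.card_le_card hsub
    _ ≤ (A ∪ B).card + 1 := by
        refine le_trans (Finset.card_union_le _ _) ?_
        simp
    _ ≤ A.card + B.card + 1 := by
        have := Finset.card_union_le A B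
        omega
    _ = mc n σ + mc m τ + 1 := by rw [hcardA, hcardB]

end StripHP
end
noncomputable section
open Finset
namespace StripHP

lemma wt_pos {w n : ℕ} {a b c : ℝ} (ha : 0 < a) (hb : 0 < b) (hc : 0 < c) (σ : ℕ → Bool) :
    0 < wt w n a b c σ := by
  unfold wt; positivity

lemma ht_alt {n k : ℕ} (hk : k ≤ n) :
    ht (extFun (fun i : Fin n => decide (Even (i:ℕ)))) k = ((k % 2 : ℕ) : ℤ) := by
  induction k with
  | zero => simp [ht]
  | succ k ih =>
    rw [ht_succ, ih (by omega)]
    have he : extFun (fun i : Fin n => decide (Even (i:ℕ))) k = decide (Even k) := by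
      unfold extFun
      rw [dif_pos (by omega : k < n)]
    rw [he]
    rcases Nat.even_or_odd k with hev | hod
    · rw [decide_eq_true hev]
      have h2 : k % 2 = 0 := Nat.even_iff.mp hev
      have h2' : (k+1) % 2 = 1 := by omega
      rw [h2, h2']
      simp [stepVal]
    · rw [decide_eq_false (by simp [Nat.even_iff, Nat.odd_iff.mp hod])]
      have h2 : k % 2 = 1 := Nat.odd_iff.mp hod
      have h2' : (k+1) % 2 = 0 := by omega
      rw [h2, h2']
      simp [stepVal]

lemma Z_pos {w n : ℕ} {a c : ℝ} (hw : 1 ≤ w) (ha : 0 < a) (hc : 0 < c) :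
    0 < Z w n a 1 c := by
  apply Finset.sum_pos'
  · intro σ _; exact (wt_pos ha one_pos hc _).le
  · refine ⟨fun i : Fin n => decide (Even (i:ℕ)), ?_, wt_pos ha one_pos hc _⟩
    simp only [Finset.mem_filter, Finset.mem_univ, true_and]
    intro k hk
    rw [ht_alt hk]
    constructor
    · positivity
    · exact_mod_cast (by omega : k % 2 ≤ w)

lemma Zp_pos {n : ℕ} {a c : ℝ} (ha : 0 < a) (hc : 0 < c) :
    0 < Zp (2 * n) a c := by
  apply Finset.sum_pos'
  · intro σ _; positivity
  · refine ⟨fun i : Fin (2*n) => decide (Even (i:ℕ)), ?_, by positivity⟩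
    simp only [Finset.mem_filter, Finset.mem_univ, true_and]
    constructor
    · intro k hk
      rw [ht_alt hk]
      positivity
    · rw [ht_alt le_rfl]
      simp [Nat.mul_mod_right]

lemma Zh_le_Z {w n h : ℕ} {a c : ℝ} (ha : 0 < a) (hc : 0 < c) :
    Zh w n h a 1 c ≤ Z w n a 1 c := by
  apply Finset.sum_le_sum_of_subset_of_nonneg
  · intro σ hσ
    simp only [Finset.mem_filter, Finset.mem_univ, true_and] at *
    exact hσ.1
  · intro σ _ _; exact (wt_pos ha one_pos hc _).le

/-- half-plane loops of length 2n have max height n, hence lie in any strip of width ≥ n -/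
lemma Zp_le_Zh {w n : ℕ} {a c : ℝ} (hw : n ≤ w) (ha : 0 < a) (hc : 0 < c) :
    Zp (2 * n) a c ≤ Zh w (2 * n) 0 a 1 c := by
  unfold Zp Zh
  rw [Nat.cast_zero]
  have hwt : ∀ σ : Fin (2*n) → Bool, wt w (2*n) a 1 c (extFun σ)
      = a ^ ma (2*n) (extFun σ) * c ^ mc (2*n) (extFun σ) := by
    intro σ; unfold wt; rw [one_pow, mul_one]
  simp only [hwt]
  apply Finset.sum_le_sum_of_subset_of_nonneg
  · intro σ hσ
    simp only [Finset.mem_filter, Finset.mem_univ, true_and] at *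
    obtain ⟨hhp, hend⟩ := hσ
    refine ⟨?_, hend⟩
    intro k hk
    refine ⟨hhp k hk, ?_⟩
    -- height at k is at most 2n - k and at most k, hence at most n ≤ w
    have hup : ht (extFun σ) k ≤ (k : ℤ) := by
      unfold ht
      calc ∑ i ∈ Finset.range k, stepVal (extFun σ i)
          ≤ ∑ _i ∈ Finset.range k, (1:ℤ) := by
            apply Finset.sum_le_sum
            intro i _
            unfold stepVal; split <;> omega
        _ = k := by simp
    have hdown : ht (extFun σ) k ≤ (2*n : ℤ) - k + ht (extFun σ) (2*n) := by
      have hsplit : ht (extFun σ) (2*n) = ht (extFun σ) k +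
          ∑ i ∈ Finset.Ico k (2*n), stepVal (extFun σ i) := by
        unfold ht
        rw [← Finset.sum_range_add_sum_Ico _ hk]
      have hlow : -((2*n : ℤ) - k) ≤ ∑ i ∈ Finset.Ico k (2*n), stepVal (extFun σ i) := by
        calc -((2*n:ℤ) - k) = ∑ _i ∈ Finset.Ico k (2*n), (-1 : ℤ) := by
              rw [Finset.sum_const, Nat.card_Ico, nsmul_eq_mul]
              push_cast
              omega
          _ ≤ _ := by
              apply Finset.sum_le_sum
              intro i _
              unfold stepVal; split <;> omega
      omega
    rw [hend] at hdown
    have : ht (extFun σ) k ≤ (n : ℤ) := by omega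
    calc ht (extFun σ) k ≤ (n : ℤ) := this
      _ ≤ (w : ℤ) := by exact_mod_cast hw
  · intro σ _ _; positivity

end StripHP
end
noncomputable section
open Finset
namespace StripHP

lemma key_concat {w m₁ m₂ : ℕ} {a c : ℝ} (h₁ : 1 ≤ m₁) (ha : 0 < a) (hc : 0 < c) :
    min 1 c * (Zh w m₁ 0 a 1 c * Zh w m₂ 0 a 1 c) ≤ Zh w (m₁ + m₂) 0 a 1 c := by
  classical
  set S₁ := Finset.univ.filter
      (fun σ : Fin m₁ → Bool => IsWalk w m₁ (extFun σ) ∧ ht (extFun σ) m₁ = ((0:ℕ) : ℤ)) with hS₁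
  set S₂ := Finset.univ.filter
      (fun σ : Fin m₂ → Bool => IsWalk w m₂ (extFun σ) ∧ ht (extFun σ) m₂ = ((0:ℕ) : ℤ)) with hS₂
  set F : (Fin m₁ → Bool) × (Fin m₂ → Bool) → (Fin (m₁ + m₂) → Bool) :=
    fun p => fun i => cat m₁ (extFun p.1) (extFun p.2) i with hF
  have hagree : ∀ p : (Fin m₁ → Bool) × (Fin m₂ → Bool), ∀ i < m₁ + m₂,
      extFun (F p) i = cat m₁ (extFun p.1) (extFun p.2) i := by
    intro p i hi
    unfold extFun
    rw [dif_pos hi]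
    simp only [hF]
    rfl
  -- main term bound
  have hterm : ∀ p ∈ S₁ ×ˢ S₂,
      min 1 c * (wt w m₁ a 1 c (extFun p.1) * wt w m₂ a 1 c (extFun p.2))
        ≤ wt w (m₁ + m₂) a 1 c (extFun (F p)) := by
    intro p hp
    rw [Finset.mem_product, hS₁, hS₂] at hp
    simp only [Finset.mem_filter, Finset.mem_univ, true_and] at hp
    obtain ⟨⟨_, hend1⟩, ⟨_, _⟩⟩ := hp
    rw [Nat.cast_zero] at hend1
    have hma : ma (m₁ + m₂) (extFun (F p)) = ma m₁ (extFun p.1) + ma m₂ (extFun p.2) := by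
      rw [ma_congr (hagree p), ma_cat hend1]
    have hmc1 : mc m₁ (extFun p.1) + mc m₂ (extFun p.2) ≤ mc (m₁ + m₂) (extFun (F p)) := by
      rw [mc_congr (hagree p)]
      exact mc_cat_ge h₁ _ _
    have hmc2 : mc (m₁ + m₂) (extFun (F p)) ≤ mc m₁ (extFun p.1) + mc m₂ (extFun p.2) + 1 := by
      rw [mc_congr (hagree p)]
      exact mc_cat_le h₁ _ _
    unfold wt
    rw [one_pow, one_pow, one_pow, mul_one, mul_one, mul_one, hma, pow_add]
    have hcpow : c ^ (mc m₁ (extFun p.1) + mc m₂ (extFun p.2)) * (min 1 c) ^ 1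
        ≤ c ^ (mc (m₁ + m₂) (extFun (F p))) := pow_sandwich hc hmc1 hmc2
    rw [pow_one] at hcpow
    calc min 1 c * (a ^ ma m₁ (extFun p.1) * c ^ mc m₁ (extFun p.1) *
          (a ^ ma m₂ (extFun p.2) * c ^ mc m₂ (extFun p.2)))
        = (a ^ ma m₁ (extFun p.1) * a ^ ma m₂ (extFun p.2)) *
          (c ^ (mc m₁ (extFun p.1) + mc m₂ (extFun p.2)) * min 1 c) := by
          rw [pow_add]; ring
      _ ≤ (a ^ ma m₁ (extFun p.1) * a ^ ma m₂ (extFun p.2)) *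
          c ^ (mc (m₁ + m₂) (extFun (F p))) := by
          apply mul_le_mul_of_nonneg_left hcpow
          positivity
  -- membership
  have hmem : ∀ p ∈ S₁ ×ˢ S₂, F p ∈ Finset.univ.filter
      (fun σ : Fin (m₁ + m₂) → Bool =>
        IsWalk w (m₁ + m₂) (extFun σ) ∧ ht (extFun σ) (m₁ + m₂) = ((0:ℕ) : ℤ)) := by
    intro p hp
    rw [Finset.mem_product, hS₁, hS₂] at hp
    simp only [Finset.mem_filter, Finset.mem_univ, true_and] at hp ⊢
    obtain ⟨⟨hw1, hend1⟩, ⟨hw2, hend2⟩⟩ := hp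
    rw [Nat.cast_zero] at hend1 hend2 ⊢
    have hh : ∀ k ≤ m₁ + m₂, ht (extFun (F p)) k = ht (cat m₁ (extFun p.1) (extFun p.2)) k :=
      fun k hk => ht_congr (fun i hi => hagree p i (by omega))
    constructor
    · intro k hk
      rw [hh k hk]
      rcases Nat.lt_or_ge k m₁ with hk1 | hk1
      · rw [ht_cat_le _ _ (by omega)]
        exact hw1 k (by omega)
      · have : k = m₁ + (k - m₁) := by omega
        rw [this, ht_cat_add, hend1, zero_add]
        exact hw2 (k - m₁) (by omega)
    · rw [hh _ le_rfl, ht_cat_add, hend1, hend2, zero_add]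
  -- injectivity
  have hinj : ∀ p ∈ S₁ ×ˢ S₂, ∀ q ∈ S₁ ×ˢ S₂, F p = F q → p = q := by
    intro p _ q _ hpq
    have h1 : p.1 = q.1 := by
      funext i
      have := congrFun hpq ⟨(i : ℕ), by omega⟩
      simp only [hF] at this
      rwa [cat_lt _ _ (by omega : (i:ℕ) < m₁), cat_lt _ _ (by omega : (i:ℕ) < m₁),
        extFun, extFun, dif_pos i.isLt, dif_pos i.isLt] at this
    have h2 : p.2 = q.2 := by
      funext j
      have := congrFun hpq ⟨m₁ + (j : ℕ), by omega⟩
      simp only [hF] at this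
      rwa [cat_ge _ _ (by omega : m₁ ≤ m₁ + (j:ℕ)), cat_ge _ _ (by omega : m₁ ≤ m₁ + (j:ℕ)),
        Nat.add_sub_cancel_left, extFun, extFun, dif_pos j.isLt, dif_pos j.isLt] at this
    exact Prod.ext h1 h2
  -- assemble
  calc min 1 c * (Zh w m₁ 0 a 1 c * Zh w m₂ 0 a 1 c)
      = ∑ p ∈ S₁ ×ˢ S₂,
          min 1 c * (wt w m₁ a 1 c (extFun p.1) * wt w m₂ a 1 c (extFun p.2)) := by
        unfold Zh
        rw [← hS₁, ← hS₂, Finset.sum_mul_sum, ← Finset.sum_product', Finset.mul_sum]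
    _ ≤ ∑ p ∈ S₁ ×ˢ S₂, wt w (m₁ + m₂) a 1 c (extFun (F p)) :=
        Finset.sum_le_sum hterm
    _ = ∑ ρ ∈ (S₁ ×ˢ S₂).image F, wt w (m₁ + m₂) a 1 c (extFun ρ) :=
        by rw [Finset.sum_image hinj]
    _ ≤ Zh w (m₁ + m₂) 0 a 1 c := by
        unfold Zh
        apply Finset.sum_le_sum_of_subset_of_nonneg
        · intro ρ hρ
          obtain ⟨p, hp, rfl⟩ := Finset.mem_image.mp hρ
          exact hmem p hp
        · intro ρ _ _
          exact (wt_pos ha one_pos hc _).le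

end StripHP
end
noncomputable section
open Finset
namespace StripHP

lemma key_upper {w n : ℕ} {a c : ℝ} (hn : 1 ≤ n) (ha : 0 < a) (hc : 0 < c) :
    (min 1 a) ^ (w+1) * (min 1 c) ^ (w+1) * Z w n a 1 c
      ≤ Zp (n + w + (n + w) % 2) a c := by
  classical
  set N := n + w + (n + w) % 2 with hN
  have hnN : n ≤ N := by omega
  have hNn : N - n ≤ w + 1 := by omega
  set T := Finset.univ.filter (fun σ : Fin n → Bool => IsWalk w n (extFun σ)) with hT
  set F : (Fin n → Bool) → (Fin N → Bool) :=
    fun σ i => cat n (extFun σ) (padSeq (ht (extFun σ) n).toNat) i with hF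
  have hagree : ∀ σ : Fin n → Bool, ∀ i < N,
      extFun (F σ) i = cat n (extFun σ) (padSeq (ht (extFun σ) n).toNat) i := by
    intro σ i hi
    unfold extFun
    rw [dif_pos hi]
    simp only [hF]
    rfl
  -- facts for walks in T
  have hkey : ∀ σ ∈ T,
      (IsHPWalk N (extFun (F σ)) ∧ ht (extFun (F σ)) N = 0) ∧
      (ma n (extFun σ) ≤ ma N (extFun (F σ)) ∧ ma N (extFun (F σ)) ≤ ma n (extFun σ) + (w+1)) ∧
      (mc n (extFun σ) ≤ mc N (extFun (F σ)) ∧ mc N (extFun (F σ)) ≤ mc n (extFun σ) + (w+1)) := by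
    intro σ hσ
    rw [hT] at hσ
    simp only [Finset.mem_filter, Finset.mem_univ, true_and] at hσ
    obtain ⟨h0, hwle⟩ := hσ n le_rfl
    set h : ℕ := (ht (extFun σ) n).toNat with hh
    have hcast : (h : ℤ) = ht (extFun σ) n := Int.toNat_of_nonneg h0
    have hhw : h ≤ w := by omega
    have hpar : (h + n) % 2 = 0 := by
      have := even_ht_add (extFun σ) n
      omega
    have hagree' : ∀ i < n, extFun σ i = extFun (F σ) i := by
      intro i hi
      rw [hagree σ i (by omega), cat_lt _ _ hi]
    have hht : ∀ k ≤ N, ht (extFun (F σ)) k = ht (cat n (extFun σ) (padSeq h)) k := by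
      intro k hk
      exact ht_congr fun i hi => (hagree σ i (by omega))
    refine ⟨⟨?_, ?_⟩, ?_, ?_⟩
    · -- half-plane walk
      intro k hk
      rw [hht k hk]
      rcases Nat.lt_or_ge k n with hk1 | hk1
      · rw [ht_cat_le _ _ (by omega)]
        exact (hσ k (by omega)).1
      · have hkeq : k = n + (k - n) := by omega
        rw [hkeq, ht_cat_add, ← hcast, ht_padSeq]
        split
        · omega
        · have : (0:ℤ) ≤ ((k - n - h) % 2 : ℕ) := by positivity
          omega
    · -- ends at zero
      rw [hht N le_rfl]
      have hNeq : N = n + (N - n) := by omega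
      rw [hNeq, ht_cat_add, ← hcast, ht_padSeq]
      have hj : ¬ (N - n ≤ h) ∨ N - n = h := by omega
      rcases Nat.eq_or_lt_of_le (show h ≤ N - n by omega) with heq | hlt
      · rw [if_pos (by omega)]
        omega
      · rw [if_neg (by omega)]
        have : (N - n - h) % 2 = 0 := by omega
        rw [this]
        simp
    · constructor
      · calc ma n (extFun σ) = ma n (extFun (F σ)) := ma_congr hagree'
          _ ≤ ma N (extFun (F σ)) := ma_mono hnN
      · refine le_trans (ma_le hnN) ?_
        rw [show ma n (extFun (F σ)) = ma n (extFun σ) from (ma_congr hagree').symm]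
        omega
    · constructor
      · calc mc n (extFun σ) = mc n (extFun (F σ)) := mc_congr hagree'
          _ ≤ mc N (extFun (F σ)) := mc_mono hnN
      · refine le_trans (mc_le hn hnN) ?_
        rw [show mc n (extFun (F σ)) = mc n (extFun σ) from (mc_congr hagree').symm]
        omega
  -- injectivity
  have hinj : ∀ p ∈ T, ∀ q ∈ T, F p = F q → p = q := by
    intro p _ q _ hpq
    funext i
    have := congrFun hpq ⟨(i : ℕ), by omega⟩
    simp only [hF] at this
    rwa [cat_lt _ _ (by omega : (i:ℕ) < n), cat_lt _ _ (by omega : (i:ℕ) < n),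
      extFun, extFun, dif_pos i.isLt, dif_pos i.isLt] at this
  -- assemble
  calc (min 1 a) ^ (w+1) * (min 1 c) ^ (w+1) * Z w n a 1 c
      = ∑ σ ∈ T, (a ^ ma n (extFun σ) * (min 1 a) ^ (w+1)) *
          (c ^ mc n (extFun σ) * (min 1 c) ^ (w+1)) := by
        unfold Z
        rw [← hT, Finset.mul_sum]
        apply Finset.sum_congr rfl
        intro σ _
        unfold wt
        rw [one_pow, mul_one]
        ring
    _ ≤ ∑ σ ∈ T, a ^ ma N (extFun (F σ)) * c ^ mc N (extFun (F σ)) := by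
        apply Finset.sum_le_sum
        intro σ hσ
        obtain ⟨_, hma, hmc⟩ := hkey σ hσ
        apply mul_le_mul (pow_sandwich ha hma.1 hma.2) (pow_sandwich hc hmc.1 hmc.2)
        · positivity
        · positivity
    _ = ∑ ρ ∈ T.image F, a ^ ma N (extFun ρ) * c ^ mc N (extFun ρ) := by
        rw [Finset.sum_image hinj]
    _ ≤ Zp N a c := by
        unfold Zp
        apply Finset.sum_le_sum_of_subset_of_nonneg
        · intro ρ hρ
          obtain ⟨σ, hσ, rfl⟩ := Finset.mem_image.mp hρ
          simp only [Finset.mem_filter, Finset.mem_univ, true_and]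
          exact (hkey σ hσ).1
        · intro ρ _ _
          positivity

end StripHP
end
noncomputable section
open Finset Filter
namespace StripHP

lemma lower_bound {a c : ℝ} (ha : 0 < a) (hc : 0 < c) (κ : ℕ → ℝ)
    (hκ : ∀ w : ℕ, 1 ≤ w →
      Tendsto (fun n : ℕ => Real.log (Z w n a 1 c) / (n : ℝ)) atTop (nhds (κ w)))
    {n w : ℕ} (hn : 1 ≤ n) (hnw : n ≤ w) :
    (Real.log (min 1 c) + Real.log (Zp (2*n) a c)) / (2*(n:ℝ)) ≤ κ w := by
  set c₀ := min 1 c with hc₀def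
  have hc₀ : 0 < c₀ := lt_min one_pos hc
  have hc₀1 : c₀ ≤ 1 := min_le_left _ _
  have hw1 : 1 ≤ w := le_trans hn hnw
  set P := Zp (2*n) a c with hPdef
  have hP : 0 < P := Zp_pos ha hc
  have hLrec : ∀ k : ℕ, 1 ≤ k → c₀^(k-1) * P ^ k ≤ Zh w (2*n*k) 0 a 1 c := by
    intro k hk
    induction k with
    | zero => omega
    | succ k ih =>
      rcases Nat.lt_or_ge k 1 with hk0 | hk1
      · have : k = 0 := by omega
        subst this
        simpa using Zp_le_Zh hnw ha hc
      · have ih' := ih hk1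
        have hcat := key_concat (w:=w) (m₁ := 2*n*k) (m₂ := 2*n) (a:=a) (c:=c)
          (by nlinarith) ha hc
        obtain ⟨j, rfl⟩ : ∃ j, k = j + 1 := ⟨k - 1, by omega⟩
        set k := j + 1 with hkdef
        have hstep : c₀^k * P^(k+1) ≤ c₀ * (Zh w (2*n*k) 0 a 1 c * Zh w (2*n) 0 a 1 c) := by
          calc c₀^k * P^(k+1) = c₀ * (c₀^(k-1) * P^k * P) := by
                rw [hkdef, show j + 1 - 1 = j from rfl]
                ring
            _ ≤ c₀ * (Zh w (2*n*k) 0 a 1 c * Zp (2*n) a c) := by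
                apply mul_le_mul_of_nonneg_left _ hc₀.le
                exact mul_le_mul_of_nonneg_right ih' hP.le
            _ ≤ c₀ * (Zh w (2*n*k) 0 a 1 c * Zh w (2*n) 0 a 1 c) := by
                apply mul_le_mul_of_nonneg_left _ hc₀.le
                apply mul_le_mul_of_nonneg_left (Zp_le_Zh hnw ha hc)
                calc (0:ℝ) ≤ c₀^(k-1) * P^k := by positivity
                  _ ≤ _ := ih'
        calc c₀^(k+1-1) * P^(k+1) = c₀^k * P^(k+1) := by norm_num
          _ ≤ c₀ * (Zh w (2*n*k) 0 a 1 c * Zh w (2*n) 0 a 1 c) := hstep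
          _ ≤ Zh w (2*n*k + 2*n) 0 a 1 c := hcat
          _ = Zh w (2*n*(k+1)) 0 a 1 c := by ring_nf
  have hZb : ∀ k : ℕ, 1 ≤ k →
      (k:ℝ) * (Real.log c₀ + Real.log P) ≤ Real.log (Z w (2*n*k) a 1 c) := by
    intro k hk
    have h1 : c₀^k * P^k ≤ Z w (2*n*k) a 1 c := by
      calc c₀^k * P^k ≤ c₀^(k-1) * P^k := by
            apply mul_le_mul_of_nonneg_right _ (by positivity)
            exact pow_le_pow_of_le_one hc₀.le hc₀1 (by omega)
        _ ≤ Zh w (2*n*k) 0 a 1 c := hLrec k hk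
        _ ≤ Z w (2*n*k) a 1 c := Zh_le_Z ha hc
    have h2 : Real.log (c₀^k * P^k) ≤ Real.log (Z w (2*n*k) a 1 c) :=
      Real.log_le_log (by positivity) h1
    rw [Real.log_mul (by positivity) (by positivity), Real.log_pow, Real.log_pow] at h2
    calc (k:ℝ) * (Real.log c₀ + Real.log P)
        = k * Real.log c₀ + k * Real.log P := by ring
      _ ≤ _ := h2
  have hsubseq : Tendsto (fun k : ℕ => 2*n*k) atTop atTop := by
    apply Filter.tendsto_atTop_atTop.mpr
    intro b
    exact ⟨b, fun k hk => by nlinarith⟩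
  have hsub : Tendsto (fun k : ℕ => Real.log (Z w (2*n*k) a 1 c) / ((2*n*k : ℕ):ℝ))
      atTop (nhds (κ w)) := (hκ w hw1).comp hsubseq
  apply ge_of_tendsto hsub
  filter_upwards [eventually_ge_atTop 1] with k hk
  have hkpos : (0:ℝ) < (2*n*k : ℕ) := by
    have : 1 ≤ 2*n*k := by nlinarith
    exact_mod_cast Nat.lt_of_lt_of_le Nat.zero_lt_one this
  rw [div_le_div_iff₀ (by positivity) hkpos]
  have := hZb k hk
  have hcast : ((2*n*k : ℕ):ℝ) = 2*(n:ℝ)*(k:ℝ) := by push_cast; ring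
  rw [hcast]
  calc (Real.log c₀ + Real.log P) * (2*(n:ℝ)*(k:ℝ))
      = ((k:ℝ) * (Real.log c₀ + Real.log P)) * (2*(n:ℝ)) := by ring
    _ ≤ Real.log (Z w (2*n*k) a 1 c) * (2*(n:ℝ)) := by
        apply mul_le_mul_of_nonneg_right this
        positivity

end StripHP
end
noncomputable section
open Finset Filter
namespace StripHP

lemma upper_bound {a c : ℝ} (ha : 0 < a) (hc : 0 < c) {κp : ℝ}
    (hκp : Tendsto (fun n : ℕ => Real.log (Zp (2 * n) a c) / (2 * (n : ℝ))) atTop (nhds κp))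
    (κ : ℕ → ℝ)
    (hκ : ∀ w : ℕ, 1 ≤ w →
      Tendsto (fun n : ℕ => Real.log (Z w n a 1 c) / (n : ℝ)) atTop (nhds (κ w)))
    {w : ℕ} (hw : 1 ≤ w) : κ w ≤ κp := by
  set δ : ℝ := (min 1 a)^(w+1) * (min 1 c)^(w+1) with hδ
  have hma : (0:ℝ) < min 1 a := lt_min one_pos ha
  have hmc : (0:ℝ) < min 1 c := lt_min one_pos hc
  have hδpos : 0 < δ := by positivity
  set M : ℕ → ℕ := fun n => (n + w + (n + w) % 2) / 2 with hM
  have hM2 : ∀ n : ℕ, 2 * M n = n + w + (n + w) % 2 := by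
    intro n; simp only [hM]; omega
  have hbound : ∀ n : ℕ, 1 ≤ n →
      Real.log (Z w n a 1 c) / (n:ℝ) ≤
        Real.log (Zp (2 * M n) a c) / (n:ℝ) - Real.log δ / (n:ℝ) := by
    intro n hn
    have hZpos : 0 < Z w n a 1 c := Z_pos hw ha hc
    have hkey : δ * Z w n a 1 c ≤ Zp (2 * M n) a c := by
      rw [hM2 n]
      exact key_upper hn ha hc
    have h1 : Real.log (δ * Z w n a 1 c) ≤ Real.log (Zp (2 * M n) a c) :=
      Real.log_le_log (by positivity) hkey
    rw [Real.log_mul hδpos.ne' hZpos.ne'] at h1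
    have hn' : (0:ℝ) < (n:ℝ) := by exact_mod_cast hn
    rw [← sub_div]
    exact (div_le_div_iff_of_pos_right hn').mpr (by linarith)
  have hMtop : Tendsto M atTop atTop := by
    apply Filter.tendsto_atTop_atTop.mpr
    intro b
    refine ⟨2*b, fun n hn => ?_⟩
    simp only [hM]; omega
  have h2 : Tendsto (fun n : ℕ => Real.log (Zp (2 * M n) a c) / (2 * (M n : ℝ)))
      atTop (nhds κp) := hκp.comp hMtop
  have hg : Tendsto (fun n : ℕ => 1 + (w:ℝ)/(n:ℝ)) atTop (nhds 1) := by
    have h0 := tendsto_const_div_atTop_nhds_zero_nat (w:ℝ)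
    have := (tendsto_const_nhds (x := (1:ℝ)) (f := atTop)).add h0
    simpa using this
  have hh : Tendsto (fun n : ℕ => 1 + ((w:ℝ)+1)/(n:ℝ)) atTop (nhds 1) := by
    have h0 := tendsto_const_div_atTop_nhds_zero_nat ((w:ℝ)+1)
    have := (tendsto_const_nhds (x := (1:ℝ)) (f := atTop)).add h0
    simpa using this
  have hrat : Tendsto (fun n : ℕ => (2 * (M n : ℝ)) / (n:ℝ)) atTop (nhds 1) := by
    apply tendsto_of_tendsto_of_tendsto_of_le_of_le' hg hh
    · filter_upwards [eventually_ge_atTop 1] with n hn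
      have hn' : (0:ℝ) < (n:ℝ) := by exact_mod_cast hn
      have hge : (n:ℝ) + w ≤ 2 * (M n : ℝ) := by
        have := hM2 n
        have : n + w ≤ 2 * M n := by omega
        exact_mod_cast this
      have : 1 + (w:ℝ)/(n:ℝ) = ((n:ℝ) + w)/(n:ℝ) := by
        field_simp
      rw [this]
      exact (div_le_div_iff_of_pos_right hn').mpr hge
    · filter_upwards [eventually_ge_atTop 1] with n hn
      have hn' : (0:ℝ) < (n:ℝ) := by exact_mod_cast hn
      have hle : 2 * (M n : ℝ) ≤ (n:ℝ) + w + 1 := by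
        have := hM2 n
        have : 2 * M n ≤ n + w + 1 := by omega
        exact_mod_cast this
      have heq : 1 + ((w:ℝ)+1)/(n:ℝ) = ((n:ℝ) + w + 1)/(n:ℝ) := by
        field_simp
        ring
      rw [heq]
      exact (div_le_div_iff_of_pos_right hn').mpr hle
  have h3 : Tendsto (fun n : ℕ => Real.log (Zp (2 * M n) a c) / (n:ℝ)) atTop (nhds κp) := by
    have hmul := h2.mul hrat
    rw [mul_one] at hmul
    apply hmul.congr'
    filter_upwards [eventually_ge_atTop 1] with n hn
    have hn' : (0:ℝ) < (n:ℝ) := by exact_mod_cast hn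
    have hMpos : (0:ℝ) < 2 * (M n : ℝ) := by
      have h4 := hM2 n
      have : 1 ≤ 2 * M n := by omega
      have : (1:ℝ) ≤ (2 * M n : ℕ) := by exact_mod_cast this
      push_cast at this
      linarith
    field_simp
    exact mul_div_cancel_right₀ _ (ne_of_gt (by linarith))
  have hδn : Tendsto (fun n : ℕ => Real.log δ / (n:ℝ)) atTop (nhds 0) :=
    tendsto_const_div_atTop_nhds_zero_nat _
  have hRHS : Tendsto (fun n : ℕ => Real.log (Zp (2 * M n) a c) / (n:ℝ)
      - Real.log δ / (n:ℝ)) atTop (nhds κp) := by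
    have := h3.sub hδn
    simpa using this
  apply le_of_tendsto_of_tendsto (hκ w hw) hRHS
  filter_upwards [eventually_ge_atTop 1] with n hn
  exact hbound n hn

end StripHP
end
/-- with no interaction at the top wall, the strip free energies converge
from below to the half-plane loop free energy. -/
theorem strip_to_halfplane (a c : ℝ) (ha : 0 < a) (hc : 0 < c)
    (κp : ℝ)
    (hκp : Tendsto (fun n : ℕ => Real.log (Zp (2 * n) a c) / (2 * (n : ℝ))) atTop (nhds κp))
    (κ : ℕ → ℝ)
    (hκ : ∀ w : ℕ, 1 ≤ w →
      Tendsto (fun n : ℕ => Real.log (Z w n a 1 c) / (n : ℝ)) atTop (nhds (κ w))) :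
    Tendsto κ atTop (nhds κp) ∧ ∀ w : ℕ, 1 ≤ w → κ w ≤ κp := by
  have upper : ∀ w : ℕ, 1 ≤ w → κ w ≤ κp := fun w hw =>
    StripHP.upper_bound ha hc hκp κ hκ hw
  refine ⟨?_, upper⟩
  -- the lower-bound sequence converges to κp
  have hc₀ : (0:ℝ) < min 1 c := lt_min one_pos hc
  have hG : Tendsto (fun n : ℕ =>
      (Real.log (min 1 c) + Real.log (Zp (2*n) a c)) / (2*(n:ℝ))) atTop (nhds κp) := by
    have h1 : Tendsto (fun n : ℕ => Real.log (min 1 c) / (2*(n:ℝ))) atTop (nhds 0) := by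
      have h0 := tendsto_const_div_atTop_nhds_zero_nat (Real.log (min 1 c) / 2)
      apply h0.congr
      intro n
      rw [div_div]
    have := h1.add hκp
    simp only [zero_add] at this
    apply this.congr
    intro n
    rw [← add_div]
  rw [Metric.tendsto_atTop]
  intro ε hε
  have hev : ∀ᶠ n : ℕ in atTop,
      κp - ε < (Real.log (min 1 c) + Real.log (Zp (2*n) a c)) / (2*(n:ℝ)) :=
    hG.eventually (eventually_gt_nhds (by linarith))
  obtain ⟨n₀, hn₀G, hn₀1⟩ := (hev.and (eventually_ge_atTop 1)).exists
  refine ⟨n₀, fun w hw => ?_⟩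
  have hlow := StripHP.lower_bound ha hc κ hκ hn₀1 hw
  have hup := upper w (le_trans hn₀1 hw)
  rw [Real.dist_eq, abs_lt]
  constructor <;> linarith
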